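/- (Extended superstability, pointwise.) Let A ∈ ℝ^{n×n}, B ∈ ℝ^{n×m}, and suppose there exist v ∈ ℝ^n with v_i > 0 for all i, M ∈ ℝ^{n×n}, and S ∈ ℝ^{m×n} such that for every i, Σ_{j=1}^n M_{ij} < v_i, and for every i, j, |A_{ij} v_j + Σ_{ℓ=1}^m B_{iℓ} S_{ℓj}| ≤ M_{ij}. Then, with W := diag(v)⁻¹ and K := S · diag(v)⁻¹, the closed-loop matrix satisfies ‖W (A + B K) W⁻¹‖_∞ < 1; i.e., A + BK is W-superstable with the diagonal weight W = diag(v)⁻¹. -/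
import Mathlib

/-- The operator norm of a square real matrix induced by the vector sup-norm:
`‖C‖_∞ = max_i ∑_j |C i j|`. -/
noncomputable def matInfNorm {n : ℕ} (C : Matrix (Fin n) (Fin n) ℝ) : ℝ :=
  ⨆ i, ∑ j, |C i j|

theorem stmt13 (n m : ℕ)
    (A : Matrix (Fin n) (Fin n) ℝ) (B : Matrix (Fin n) (Fin m) ℝ)
    (v : Fin n → ℝ) (hv : ∀ i, 0 < v i)
    (M : Matrix (Fin n) (Fin n) ℝ) (S : Matrix (Fin m) (Fin n) ℝ)
    (hrow : ∀ i, ∑ j, M i j < v i)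
    (helem : ∀ i j, |A i j * v j + ∑ ℓ, B i ℓ * S ℓ j| ≤ M i j) :
    matInfNorm ((Matrix.diagonal v)⁻¹ *
      (A + B * (S * (Matrix.diagonal v)⁻¹)) * Matrix.diagonal v) < 1 := by
  have hdi : (Matrix.diagonal v)⁻¹ = Matrix.diagonal (fun i => (v i)⁻¹) := by
    apply Matrix.inv_eq_right_inv
    rw [Matrix.diagonal_mul_diagonal]
    ext i j
    by_cases h : i = j <;>
      simp [Matrix.diagonal_apply, Matrix.one_apply, h, mul_inv_cancel₀ (hv j).ne']
  rw [hdi]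
  unfold matInfNorm
  -- entry formula
  have hentry : ∀ i j,
      (Matrix.diagonal (fun i => (v i)⁻¹) *
        (A + B * (S * Matrix.diagonal (fun i => (v i)⁻¹))) * Matrix.diagonal v) i j
      = (v i)⁻¹ * (A i j * v j + ∑ ℓ, B i ℓ * S ℓ j) := by
    intro i j
    have hvj : v j ≠ 0 := (hv j).ne'
    have h1 : (B * (S * Matrix.diagonal (fun i => (v i)⁻¹))) i j
        = (∑ ℓ, B i ℓ * S ℓ j) * (v j)⁻¹ := by
      simp [Matrix.mul_apply, Matrix.mul_diagonal, Matrix.diagonal_apply, mul_ite, mul_zero,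
        Finset.sum_ite_eq', Finset.sum_mul, mul_assoc]
    rw [Matrix.mul_diagonal, Matrix.diagonal_mul, Matrix.add_apply, h1]
    rw [mul_assoc, add_mul, mul_assoc ((∑ ℓ, B i ℓ * S ℓ j)) _ _, inv_mul_cancel₀ hvj, mul_one]
  -- each row sum < 1
  have hlt : ∀ i, ∑ j, |(Matrix.diagonal (fun i => (v i)⁻¹) *
        (A + B * (S * Matrix.diagonal (fun i => (v i)⁻¹))) * Matrix.diagonal v) i j| < 1 := by
    intro i
    have hvi : (0:ℝ) < v i := hv i
    calc ∑ j, |(Matrix.diagonal (fun i => (v i)⁻¹) *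
        (A + B * (S * Matrix.diagonal (fun i => (v i)⁻¹))) * Matrix.diagonal v) i j|
        = ∑ j, (v i)⁻¹ * |A i j * v j + ∑ ℓ, B i ℓ * S ℓ j| := by
          refine Finset.sum_congr rfl fun j _ => ?_
          rw [hentry, abs_mul, abs_of_pos (inv_pos.mpr hvi)]
      _ ≤ ∑ j, (v i)⁻¹ * M i j := by
          refine Finset.sum_le_sum fun j _ => ?_
          exact mul_le_mul_of_nonneg_left (helem i j) (inv_pos.mpr hvi).le
      _ = (v i)⁻¹ * ∑ j, M i j := by rw [Finset.mul_sum]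
      _ < (v i)⁻¹ * v i := by
          exact mul_lt_mul_of_pos_left (hrow i) (inv_pos.mpr hvi)
      _ = 1 := inv_mul_cancel₀ hvi.ne'
  rcases Nat.eq_zero_or_pos n with h0 | hn
  · subst h0
    simp [ciSup_of_empty]
  · have : Nonempty (Fin n) := ⟨⟨0, hn⟩⟩
    obtain ⟨i0, hi0⟩ := Finite.exists_max (fun i => ∑ j, |(Matrix.diagonal (fun i => (v i)⁻¹) *
        (A + B * (S * Matrix.diagonal (fun i => (v i)⁻¹))) * Matrix.diagonal v) i j|)
    exact lt_of_le_of_lt (ciSup_le hi0) (hlt i0)
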